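/- There exists a constant K > 0 such that for every x ∈ ℝ⁴ with x ≠ 0, the integral of 1/(‖x-y‖² ‖y‖⁴) over the region {y ∈ ℝ⁴ : ‖y‖ ≥ ‖x‖/2 and ‖y-x‖ ≥ ‖x‖/2} satisfies ∫ dy/(‖x-y‖² ‖y‖⁴) ≤ K ‖x‖^{-2}. (One may take K = 8π², by splitting the region according to whether ‖y-x‖ ≥ ‖y‖ or ‖y-x‖ ≤ ‖y‖ and bounding the integrand by ‖y‖^{-6} or ‖y-x‖^{-6} respectively.) -/

import Mathlib

open MeasureTheory Real
open Set

noncomputable abbrev E4 : Type := EuclideanSpace ℝ (Fin 4)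

lemma ptwise {a b : ℝ} (ha : 0 < a) (hb : 0 < b) :
    1 / (a ^ 2 * b ^ 4) ≤ (b ^ 6)⁻¹ + (a ^ 6)⁻¹ := by
  rcases le_total a b with h | h
  · have h4 : a ^ 4 ≤ b ^ 4 := pow_le_pow_left₀ ha.le h 4
    have : a ^ 6 ≤ a ^ 2 * b ^ 4 := by
      calc a ^ 6 = a ^ 2 * a ^ 4 := by ring
        _ ≤ a ^ 2 * b ^ 4 := by gcongr
    have h1 : 1 / (a ^ 2 * b ^ 4) ≤ (a ^ 6)⁻¹ := by
      rw [one_div]; exact inv_anti₀ (by positivity) this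
    have h2 : (0:ℝ) ≤ (b ^ 6)⁻¹ := by positivity
    linarith
  · have h2' : b ^ 2 ≤ a ^ 2 := pow_le_pow_left₀ hb.le h 2
    have : b ^ 6 ≤ a ^ 2 * b ^ 4 := by
      calc b ^ 6 = b ^ 2 * b ^ 4 := by ring
        _ ≤ a ^ 2 * b ^ 4 := by gcongr
    have h1 : 1 / (a ^ 2 * b ^ 4) ≤ (b ^ 6)⁻¹ := by
      rw [one_div]; exact inv_anti₀ (by positivity) this
    have h2 : (0:ℝ) ≤ (a ^ 6)⁻¹ := by positivity
    linarith

lemma F_integrable {r : ℝ} (hr : 0 < r) :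
    Integrable (fun y : E4 => (Ici r).indicator (fun t : ℝ => (t ^ 6)⁻¹) ‖y‖) := by
  have hdim : (Module.finrank ℝ E4 : ℝ) < 6 := by
    simp [finrank_euclideanSpace_fin]; norm_num
  have hint : Integrable (fun y : E4 => ((1 + r) / r) ^ 6 * (1 + ‖y‖) ^ (-(6:ℝ))) :=
    (integrable_one_add_norm hdim).const_mul _
  refine hint.mono' ?_ (Filter.Eventually.of_forall fun y => ?_)
  · apply Measurable.aestronglyMeasurable
    exact ((measurable_inv.comp (measurable_id.pow_const 6)).indicator measurableSet_Ici).comp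
      measurable_norm
  · rw [Real.norm_eq_abs, abs_of_nonneg (Set.indicator_nonneg (fun t _ => by positivity) _)]
    have hrpow : (1 + ‖y‖) ^ (-(6:ℝ)) = ((1 + ‖y‖) ^ (6:ℕ))⁻¹ := by
      rw [show (-(6:ℝ)) = -((6:ℕ):ℝ) by norm_num, Real.rpow_neg (by positivity),
        Real.rpow_natCast]
    rw [hrpow]
    simp only [Set.indicator_apply, Set.mem_Ici]
    split_ifs with hy
    · have hy0 : 0 < ‖y‖ := lt_of_lt_of_le hr hy
      have key : (1 + ‖y‖) ^ 6 ≤ ((1 + r) / r) ^ 6 * ‖y‖ ^ 6 := by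
        rw [← mul_pow]
        apply pow_le_pow_left₀ (by positivity)
        rw [div_mul_eq_mul_div, le_div_iff₀ hr]
        nlinarith
      calc (‖y‖ ^ 6)⁻¹ = ((1 + r) / r) ^ 6 * (((1 + r) / r) ^ 6 * ‖y‖ ^ 6)⁻¹ := by
            field_simp
        _ ≤ ((1 + r) / r) ^ 6 * ((1 + ‖y‖) ^ 6)⁻¹ := by
            gcongr

    · positivity

lemma F_integral {r : ℝ} (hr : 0 < r) :
    ∫ y : E4, (Ici r).indicator (fun t : ℝ => (t ^ 6)⁻¹) ‖y‖ =
      2 * (volume (Metric.ball (0 : E4) 1)).toReal * (r ^ 2)⁻¹ := by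
  rw [integral_fun_norm_addHaar (volume : Measure E4)
    ((Ici r).indicator (fun t : ℝ => (t ^ 6)⁻¹))]
  have hdim : Module.finrank ℝ E4 = 4 := finrank_euclideanSpace_fin
  rw [hdim]
  have : ∫ y in Ioi (0:ℝ), y ^ (4 - 1) • (Ici r).indicator (fun t : ℝ => (t ^ 6)⁻¹) y
      = (r ^ 2)⁻¹ / 2 := by
    have h1 : ∀ y : ℝ, y ^ (4 - 1) • (Ici r).indicator (fun t : ℝ => (t ^ 6)⁻¹) y
        = (Ici r).indicator (fun t : ℝ => t ^ 3 * (t ^ 6)⁻¹) y := by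
      intro y
      simp only [Set.indicator_apply, smul_eq_mul]
      split_ifs <;> simp
    simp_rw [h1]
    rw [setIntegral_indicator measurableSet_Ici,
      show Ioi (0:ℝ) ∩ Ici r = Ici r from inter_eq_self_of_subset_right
        (fun y hy => lt_of_lt_of_le hr hy),
      integral_Ici_eq_integral_Ioi]
    rw [setIntegral_congr_fun measurableSet_Ioi
      (g := fun y : ℝ => y ^ (-3 : ℝ)) ?_]
    · rw [integral_Ioi_rpow_of_lt (by norm_num) hr]
      have : r ^ ((-3:ℝ) + 1) = (r ^ (2:ℕ))⁻¹ := by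
        rw [show (-3:ℝ) + 1 = -((2:ℕ):ℝ) by norm_num, Real.rpow_neg hr.le, Real.rpow_natCast]
      rw [this]; ring
    · intro y hy
      have hy0 : 0 < y := lt_trans hr hy
      show y ^ 3 * (y ^ 6)⁻¹ = y ^ (-3 : ℝ)
      rw [show (-3:ℝ) = -((3:ℕ):ℝ) by norm_num, Real.rpow_neg hy0.le, Real.rpow_natCast]
      field_simp
  rw [this]
  simp only [nsmul_eq_mul, smul_eq_mul, measureReal_def]
  ring


/-- The estimate for the third term in the decomposition used in the proof of
Proposition 4.1: there is a constant `K > 0` (one may take `K = 8π²`) so that the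
integral of `1/(‖x-y‖² ‖y‖⁴)` over the complement of the two balls of radius `‖x‖/2`
centered at `0` and at `x` is at most `K ‖x‖⁻²`. -/
theorem thirdTerm_estimate :
    ∃ K > (0 : ℝ), ∀ x : EuclideanSpace ℝ (Fin 4), x ≠ 0 →
      ∫ y in {y : EuclideanSpace ℝ (Fin 4) | ‖x‖ / 2 ≤ ‖y‖ ∧ ‖x‖ / 2 ≤ ‖y - x‖},
          1 / (‖x - y‖ ^ 2 * ‖y‖ ^ 4)
        ≤ K / ‖x‖ ^ 2 := by
  set c := (volume (Metric.ball (0 : E4) 1)).toReal with hc_def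
  have hc : 0 < c := ENNReal.toReal_pos (Metric.measure_ball_pos volume 0 one_pos).ne'
    measure_ball_lt_top.ne
  refine ⟨16 * c, by positivity, fun x hx => ?_⟩
  have hxn : 0 < ‖x‖ := norm_pos_iff.mpr hx
  set r := ‖x‖ / 2 with hr_def
  have hr : 0 < r := by positivity
  set F : E4 → ℝ := fun y => (Ici r).indicator (fun t : ℝ => (t ^ 6)⁻¹) ‖y‖ with hF_def
  have hF : Integrable F := F_integrable hr
  have hFx : Integrable (fun y => F (y - x)) := hF.comp_sub_right x
  have hFnn : ∀ y, 0 ≤ F y := fun y => Set.indicator_nonneg (fun t _ => by positivity) _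
  set S : Set E4 := {y | r ≤ ‖y‖ ∧ r ≤ ‖y - x‖} with hS_def
  have hS : MeasurableSet S := by
    have h1 : MeasurableSet {y : E4 | r ≤ ‖y‖} :=
      measurableSet_le measurable_const measurable_norm
    have h2 : MeasurableSet {y : E4 | r ≤ ‖y - x‖} :=
      measurableSet_le measurable_const ((measurable_id.sub_const x).norm)
    exact h1.inter h2
  have hmain : ∀ y ∈ S, 1 / (‖x - y‖ ^ 2 * ‖y‖ ^ 4) ≤ F y + F (y - x) := by
    intro y hy
    obtain ⟨h1, h2⟩ := hy
    have ha : 0 < ‖x - y‖ := by rw [norm_sub_rev]; exact lt_of_lt_of_le hr h2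
    have hb : 0 < ‖y‖ := lt_of_lt_of_le hr h1
    have e1 : F y = (‖y‖ ^ 6)⁻¹ := Set.indicator_of_mem h1 _
    have e2 : F (y - x) = (‖x - y‖ ^ 6)⁻¹ := by
      rw [norm_sub_rev x y]
      exact Set.indicator_of_mem h2 _
    rw [e1, e2]
    exact ptwise ha hb
  have hm : Measurable fun y : E4 => 1 / (‖x - y‖ ^ 2 * ‖y‖ ^ 4) := by fun_prop
  have hfS : IntegrableOn (fun y : E4 => 1 / (‖x - y‖ ^ 2 * ‖y‖ ^ 4)) S := by
    refine ((hF.add hFx).integrableOn).mono' hm.aestronglyMeasurable ?_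
    refine (ae_restrict_iff' hS).2 (ae_of_all _ fun y hy => ?_)
    rw [Real.norm_eq_abs, abs_of_nonneg (by positivity)]
    exact hmain y hy
  calc ∫ y in S, 1 / (‖x - y‖ ^ 2 * ‖y‖ ^ 4)
      ≤ ∫ y in S, (F y + F (y - x)) :=
        setIntegral_mono_on hfS ((hF.add hFx).integrableOn) hS hmain
    _ ≤ ∫ y, (F y + F (y - x)) :=
        setIntegral_le_integral (hF.add hFx)
          (ae_of_all _ fun y => add_nonneg (hFnn y) (hFnn _))
    _ = (∫ y, F y) + ∫ y, F (y - x) := integral_add hF hFx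
    _ = 2 * ∫ y, F y := by rw [integral_sub_right_eq_self F x]; ring
    _ = 2 * (2 * c * (r ^ 2)⁻¹) := by rw [hF_def, F_integral hr]
    _ = 16 * c / ‖x‖ ^ 2 := by
        rw [hr_def]
        field_simp
        ring
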